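/- arXiv:2407.01028 — 3 statements merged into one kernel-verified Lean document; each statement's English description precedes it below -/
import Mathlib

section
/- For complex ν with Re ν < 0 and any complex z, the Hermite function satisfies H_ν(z) = (1/Γ(-ν)) ∫_0^∞ e^{-t² - 2tz} t^{-ν-1} dt, where the integral converges absolutely. -/
open Complex MeasureTheory Set

noncomputable section

/-- `ω = e^{iπ/4}`. -/
def ω : ℂ := Complex.exp (Real.pi * Complex.I / 4)

/-- Hermite function of complex order `ν`, defined by its power series
(Lebedev (10.4.3)): `H_ν(z) = (1/(2Γ(-ν))) Σ_n Γ((n-ν)/2)(-2z)^n/n!`. -/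
def HermiteF (ν z : ℂ) : ℂ :=
  (1 / (2 * Complex.Gamma (-ν))) *
    ∑' n : ℕ, Complex.Gamma (((n : ℂ) - ν) / 2) * (-2 * z) ^ n / (Nat.factorial n : ℂ)

/-- Riemann's auxiliary function `ℛ(s) = ∫_{0↙1} x^{-s} e^{πix²}/(e^{πix}-e^{-πix}) dx`,
with the path parametrized as `x = 1/2 - ω u`, `u ∈ ℝ`, so `dx = -ω du`. -/
def RiemannR (s : ℂ) : ℂ :=
  ∫ u : ℝ, (-ω) * ((1 / 2 - ω * u) ^ (-s) *
      Complex.exp (Real.pi * Complex.I * (1 / 2 - ω * u) ^ 2) /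
    (Complex.exp (Real.pi * Complex.I * (1 / 2 - ω * u)) -
      Complex.exp (-(Real.pi : ℂ) * Complex.I * (1 / 2 - ω * u))))

/-- Parabolic cylinder function `U(a,z)`, expressed through the Hermite function via
`U(-ν-1/2,z) = 2^{-ν/2} e^{-z²/4} H_ν(z/√2)`. -/
def cylinderU (a z : ℂ) : ℂ :=
  (2 : ℂ) ^ (a / 2 + 1 / 4) * Complex.exp (-z ^ 2 / 4) *
    HermiteF (-a - 1 / 2) (z / (Real.sqrt 2 : ℂ))

/-- Whittaker's parabolic cylinder function `D_ν(z) = U(-ν-1/2, z)`. -/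
def whittakerD (ν z : ℂ) : ℂ := cylinderU (-ν - 1 / 2) z

namespace HermiteAux

lemma contOn_cpow (c : ℂ) : ContinuousOn (fun t : ℝ => (t:ℂ) ^ c) (Ioi 0) := by
  apply continuousOn_of_forall_continuousAt
  intro x hx
  exact (continuousAt_cpow_const (Complex.ofReal_mem_slitPlane.2 hx)).comp
    Complex.continuous_ofReal.continuousAt

lemma gauss_integrable (s : ℂ) (hs : 0 < s.re) :
    IntegrableOn (fun t : ℝ => Complex.exp (-(t:ℂ)^2) * (t:ℂ)^(s-1)) (Ioi 0) := by
  constructor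
  · refine ContinuousOn.aestronglyMeasurable ?_ measurableSet_Ioi
    exact ((Complex.continuous_exp.comp (by continuity : Continuous fun t : ℝ =>
      -(t:ℂ)^2)).continuousOn).mul (contOn_cpow _)
  · rw [← hasFiniteIntegral_norm_iff]
    refine ((integrableOn_rpow_mul_exp_neg_mul_sq one_pos
      (by linarith : (-1:ℝ) < s.re - 1)).2).congr ?_
    apply (ae_restrict_iff' measurableSet_Ioi).mpr
    filter_upwards with x hx
    rw [norm_mul, Complex.norm_cpow_eq_rpow_re_of_pos hx, Complex.norm_exp]
    have : (-(x:ℂ)^2).re = -1 * x^2 := by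
      simp [← Complex.ofReal_pow]
    rw [this]
    simp [Complex.sub_re, mul_comm]

lemma gauss_mellin (s : ℂ) (hs : 0 < s.re) :
    ∫ t in Ioi (0:ℝ), Complex.exp (-(t:ℂ)^2) * (t:ℂ)^(s-1) = Complex.Gamma (s/2) / 2 := by
  have hs2 : 0 < (s/2).re := by rw [Complex.div_ofNat_re]; positivity
  have key := integral_comp_rpow_Ioi
      (fun y : ℝ => ((Real.exp (-y) : ℝ) : ℂ) * (y:ℂ)^(s/2-1)) (two_ne_zero (α := ℝ))
  rw [Complex.Gamma_eq_integral hs2, Complex.GammaIntegral, ← key]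
  have hcong : ∀ x ∈ Ioi (0:ℝ),
      (|(2:ℝ)| * x ^ ((2:ℝ)-1)) •
        (((Real.exp (-(x ^ (2:ℝ))) : ℝ) : ℂ) * ((x ^ (2:ℝ) : ℝ):ℂ)^(s/2-1))
        = 2 * (Complex.exp (-(x:ℂ)^2) * (x:ℂ)^(s-1)) := by
    intro x hx
    have hx0 : (0:ℝ) < x := hx
    have hxc : (x:ℂ) ≠ 0 := ofReal_ne_zero.2 hx0.ne'
    have h1 : x ^ (2:ℝ) = x ^ (2:ℕ) := by
      rw [← Real.rpow_natCast x 2]; norm_num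
    have harg1 : -Real.pi < (Complex.log (x:ℂ) * ((2:ℕ):ℂ)).im := by
      rw [Complex.mul_im]
      simp [Complex.log_im, Complex.arg_ofReal_of_nonneg hx0.le, Real.pi_pos]
    have harg2 : (Complex.log (x:ℂ) * ((2:ℕ):ℂ)).im ≤ Real.pi := by
      rw [Complex.mul_im]
      simp [Complex.log_im, Complex.arg_ofReal_of_nonneg hx0.le, Real.pi_pos.le]
    have h3 : (((x:ℂ) ^ (2:ℕ)) : ℂ) ^ (s/2-1) = (x:ℂ) ^ (s - 2) := by
      calc ((x:ℂ)^(2:ℕ))^(s/2-1) = ((x:ℂ)^(((2:ℕ)):ℂ))^(s/2-1) := by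
            rw [Complex.cpow_natCast]
        _ = (x:ℂ)^((((2:ℕ)):ℂ)*(s/2-1)) := (Complex.cpow_mul _ harg1 harg2).symm
        _ = (x:ℂ)^(s-2) := by rw [show (((2:ℕ)):ℂ)*(s/2-1) = s - 2 by push_cast; ring]
    rw [h1]
    have h2 : ((x ^ (2:ℕ) : ℝ) : ℂ) = (x:ℂ) ^ (2:ℕ) := by push_cast; ring
    rw [h2, h3]
    have h4 : ((Real.exp (-(x ^ (2:ℕ))) : ℝ) : ℂ) = Complex.exp (-(x:ℂ)^2) := by
      rw [Complex.ofReal_exp]; push_cast; ring_nf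
    rw [h4, Complex.real_smul]
    rw [show s - 1 = (s-2) + 1 by ring, Complex.cpow_add _ _ hxc, Complex.cpow_one]
    have h5 : |(2:ℝ)| * x ^ ((2:ℝ)-1) = 2 * x := by
      rw [abs_of_pos (by norm_num : (0:ℝ) < 2)]; norm_num
    rw [h5]
    push_cast
    ring
  rw [setIntegral_congr_fun measurableSet_Ioi hcong, integral_const_mul]
  ring

lemma norm_Gamma_le {s : ℂ} (hs : 0 < s.re) : ‖Complex.Gamma s‖ ≤ Real.Gamma s.re := by
  rw [Complex.Gamma_eq_integral hs, Complex.GammaIntegral, Real.Gamma_eq_integral hs]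
  refine (norm_integral_le_integral_norm _).trans_eq ?_
  refine setIntegral_congr_fun measurableSet_Ioi (fun x hx => ?_)
  rw [norm_mul, Complex.norm_cpow_eq_rpow_re_of_pos hx]
  simp [Complex.norm_exp, Complex.sub_re]

lemma gamma_midpoint {a x : ℝ} (ha : 0 < a) (hx : 0 < x) :
    Real.Gamma ((x + a)/2) ≤ Real.sqrt (Real.Gamma a * Real.Gamma x) := by
  have h := Real.convexOn_log_Gamma.2 (mem_Ioi.2 ha) (mem_Ioi.2 hx)
    (by norm_num : (0:ℝ) ≤ 1/2) (by norm_num : (0:ℝ) ≤ 1/2) (by norm_num)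
  simp only [Function.comp_apply, smul_eq_mul] at h
  have hmid : (1/2 : ℝ) * a + (1/2 : ℝ) * x = (x + a)/2 := by ring
  rw [hmid] at h
  have hg : 0 < Real.Gamma ((x+a)/2) := Real.Gamma_pos_of_pos (by positivity)
  have hga : 0 < Real.Gamma a := Real.Gamma_pos_of_pos ha
  have hgx : 0 < Real.Gamma x := Real.Gamma_pos_of_pos hx
  have hs : Real.sqrt (Real.Gamma a * Real.Gamma x)
      = Real.exp ((1/2) * Real.log (Real.Gamma a) + (1/2) * Real.log (Real.Gamma x)) := by
    rw [show Real.Gamma a * Real.Gamma x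
        = Real.exp (Real.log (Real.Gamma a) + Real.log (Real.Gamma x)) by
      rw [Real.exp_add, Real.exp_log hga, Real.exp_log hgx]]
    rw [Real.sqrt_eq_rpow, Real.rpow_def_of_pos (Real.exp_pos _), Real.log_exp]
    ring_nf
  rw [hs, ← Real.exp_log hg]
  exact Real.exp_le_exp.2 h

lemma summable_herm (ν z : ℂ) (hν : ν.re < 0) :
    Summable (fun n : ℕ =>
      Complex.Gamma (((n:ℂ) - ν)/2) * (-2*z)^n / (Nat.factorial n : ℂ)) := by
  have ha : 0 < -ν.re := by linarith
  set r : ℝ := ‖(-2*z : ℂ)‖ with hr_def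
  have hr0 : 0 ≤ r := norm_nonneg _
  set C : ℝ := Real.sqrt (Real.Gamma (-ν.re)) with hC
  have hC0 : 0 ≤ C := Real.sqrt_nonneg _
  rw [← summable_nat_add_iff 1]
  have hb0 : Summable (fun n : ℕ =>
      Real.sqrt (Nat.factorial n) * r^(n+1) / (Nat.factorial (n+1))) := by
    apply summable_of_ratio_norm_eventually_le (r := 1/2) (by norm_num)
    filter_upwards [Filter.eventually_ge_atTop (Nat.ceil ((2*r)^2))] with n hn
    have h1 : (2*r)^2 ≤ (n+1 : ℝ) := by
      calc (2*r)^2 ≤ (Nat.ceil ((2*r)^2) : ℝ) := Nat.le_ceil _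
        _ ≤ n := by exact_mod_cast hn
        _ ≤ n+1 := by linarith
    have hs0 : (0:ℝ) ≤ Real.sqrt ((n:ℝ)+1) := Real.sqrt_nonneg _
    have hs2 : Real.sqrt ((n:ℝ)+1) ^ 2 = (n:ℝ)+1 :=
      Real.sq_sqrt (by positivity)
    have hrle : 2*r ≤ Real.sqrt ((n:ℝ)+1) := by
      rw [← Real.sqrt_sq (by positivity : (0:ℝ) ≤ 2*r)]
      exact Real.sqrt_le_sqrt h1
    have e1 : Real.sqrt (Nat.factorial (n+1)) =
        Real.sqrt (Nat.factorial n) * Real.sqrt ((n:ℝ)+1) := by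
      rw [Nat.factorial_succ]
      push_cast
      rw [Real.sqrt_mul (by positivity), mul_comm]
    have hfne : ((Nat.factorial (n+1) : ℝ)) ≠ 0 := by positivity
    have hfne2 : ((Nat.factorial (n+2) : ℝ)) ≠ 0 := by positivity
    have key : Real.sqrt (Nat.factorial (n+1)) * r^(n+1+1) / (Nat.factorial (n+1+1))
        = (Real.sqrt (Nat.factorial n) * r^(n+1) / (Nat.factorial (n+1))) *
          (Real.sqrt ((n:ℝ)+1) * r / ((n:ℝ)+2)) := by
      rw [e1, show Nat.factorial (n+1+1) = (n+2) * Nat.factorial (n+1) from rfl]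
      push_cast
      field_simp
      ring
    have hfac : Real.sqrt ((n:ℝ)+1) * r / ((n:ℝ)+2) ≤ 1/2 := by
      rw [div_le_iff₀ (by positivity)]
      nlinarith
    rw [Real.norm_of_nonneg (by positivity), Real.norm_of_nonneg (by positivity), key]
    have hfn0 : 0 ≤ Real.sqrt (Nat.factorial n) * r^(n+1) / (Nat.factorial (n+1)) := by
      positivity
    calc _ ≤ (Real.sqrt (Nat.factorial n) * r^(n+1) / (Nat.factorial (n+1))) * (1/2) :=
          mul_le_mul_of_nonneg_left hfac hfn0
      _ = 1/2 * _ := by ring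
  have hb : Summable (fun n : ℕ =>
      C * Real.sqrt (Nat.factorial n) * r^(n+1) / (Nat.factorial (n+1))) :=
    (hb0.mul_left C).congr (fun n => by ring)
  refine Summable.of_norm_bounded hb (fun n => ?_)
  have hw : 0 < ((((n+1:ℕ):ℂ) - ν)/2).re := by
    rw [Complex.div_ofNat_re]
    have h1 : (((n+1:ℕ):ℂ) - ν).re = ((n+1:ℕ):ℝ) - ν.re := by
      simp [Complex.sub_re]
    rw [h1]
    have h2 : (0:ℝ) < ((n+1:ℕ):ℝ) - ν.re := by
      have : (0:ℝ) ≤ ((n+1:ℕ):ℝ) := by positivity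
      linarith
    positivity
  have hre : ((((n+1:ℕ):ℂ) - ν)/2).re = (((n:ℝ)+1) + -ν.re)/2 := by
    rw [Complex.div_ofNat_re]
    simp [Complex.sub_re]
    ring
  have hgb : ‖Complex.Gamma ((((n+1:ℕ):ℂ) - ν)/2)‖ ≤ C * Real.sqrt (Nat.factorial n) := by
    refine (norm_Gamma_le hw).trans ?_
    rw [hre]
    refine (gamma_midpoint ha (by positivity : (0:ℝ) < (n:ℝ)+1)).trans_eq ?_
    rw [show Real.Gamma ((n:ℝ)+1) = (Nat.factorial n : ℝ) from Real.Gamma_nat_eq_factorial n,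
      Real.sqrt_mul (Real.Gamma_pos_of_pos ha).le]
  calc ‖Complex.Gamma ((((n+1:ℕ):ℂ) - ν)/2) * (-2*z)^(n+1) / ((Nat.factorial (n+1) : ℂ))‖
      = ‖Complex.Gamma ((((n+1:ℕ):ℂ) - ν)/2)‖ * r^(n+1) / (Nat.factorial (n+1)) := by
        rw [norm_div, norm_mul, norm_pow, Complex.norm_natCast]
    _ ≤ (C * Real.sqrt (Nat.factorial n)) * r^(n+1) / (Nat.factorial (n+1)) := by
        gcongr
    _ = C * Real.sqrt (Nat.factorial n) * r^(n+1) / (Nat.factorial (n+1)) := by ring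

lemma contNeg : Continuous fun t : ℝ => -(t:ℂ)^2 :=
  (Complex.continuous_ofReal.pow 2).neg

lemma contNeg2 (z : ℂ) : Continuous fun t : ℝ => -(t:ℂ)^2 - 2*(t:ℂ)*z :=
  (Complex.continuous_ofReal.pow 2).neg.sub
    ((continuous_const.mul Complex.continuous_ofReal).mul continuous_const)

lemma Fform (ν z : ℂ) (N : ℕ) {t : ℝ} (ht : 0 < t) :
    ∑ n ∈ Finset.range N,
      ((-2*z)^n/(Nat.factorial n : ℂ)) * (Complex.exp (-(t:ℂ)^2) * (t:ℂ)^((n:ℂ) - ν - 1))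
    = Complex.exp (-(t:ℂ)^2) * (t:ℂ)^(-ν-1) *
        ∑ n ∈ Finset.range N, (-2*(t:ℂ)*z)^n/(Nat.factorial n : ℂ) := by
  rw [Finset.mul_sum]
  refine Finset.sum_congr rfl fun n _ => ?_
  have htne : (t:ℂ) ≠ 0 := Complex.ofReal_ne_zero.2 ht.ne'
  rw [show (n:ℂ) - ν - 1 = (-ν-1) + n by ring, Complex.cpow_add _ _ htne,
    Complex.cpow_natCast,
    show (-2*(t:ℂ)*z) = (-2*z)*(t:ℂ) by ring, mul_pow]
  ring

end HermiteAux

open HermiteAux Filter in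
set_option maxHeartbeats 1000000 in
theorem hermite_integral_rep (ν z : ℂ) (hν : ν.re < 0) :
    IntegrableOn (fun t : ℝ =>
      Complex.exp (-(t : ℂ) ^ 2 - 2 * t * z) * (t : ℂ) ^ (-ν - 1)) (Ioi 0) ∧
    HermiteF ν z = (1 / Complex.Gamma (-ν)) *
      ∫ t in Ioi (0 : ℝ), Complex.exp (-(t : ℂ) ^ 2 - 2 * t * z) * (t : ℂ) ^ (-ν - 1) := by
  have ha : 0 < -ν.re := by linarith
  -- The dominating bound
  set B : ℝ → ℝ := fun t => Real.exp (2*‖z‖^2) * (t ^ (-ν.re-1) * Real.exp (-(1/2) * t^2))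
    with hB
  have hBint : Integrable B (volume.restrict (Ioi 0)) := by
    exact (integrableOn_rpow_mul_exp_neg_mul_sq (by norm_num : (0:ℝ) < 1/2)
      (by linarith : (-1:ℝ) < -ν.re - 1)).const_mul _
  -- norm of main integrand
  have hnorm : ∀ t : ℝ, 0 < t → ‖Complex.exp (-(t:ℂ)^2 - 2*t*z) * (t:ℂ)^(-ν-1)‖
      = Real.exp (-t^2 - 2*t*z.re) * t ^ (-ν.re - 1) := by
    intro t ht
    rw [norm_mul, Complex.norm_exp, Complex.norm_cpow_eq_rpow_re_of_pos ht]
    have h1 : (-(t:ℂ)^2 - 2*(t:ℂ)*z).re = -t^2 - 2*t*z.re := by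
      rw [show -(t:ℂ)^2 - 2*(t:ℂ)*z = ((-t^2 : ℝ):ℂ) - ((2*t:ℝ):ℂ)*z by push_cast; ring,
        Complex.sub_re, Complex.ofReal_re, Complex.re_ofReal_mul]
    have h2 : (-ν-1).re = -ν.re - 1 := by simp [Complex.sub_re]
    rw [h1, h2]
  have hkey : ∀ t : ℝ, 0 < t → Real.exp (-t^2 + 2*t*‖z‖) * t ^ (-ν.re - 1) ≤ B t := by
    intro t ht
    have h2 : -t^2 + 2*t*‖z‖ ≤ 2*‖z‖^2 + (-(1/2) * t^2) := by
      nlinarith [sq_nonneg (2*‖z‖ - t), norm_nonneg z, ht.le]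
    calc Real.exp (-t^2 + 2*t*‖z‖) * t ^ (-ν.re - 1)
        ≤ (Real.exp (2*‖z‖^2) * Real.exp (-(1/2) * t^2)) * t ^ (-ν.re - 1) := by
          rw [← Real.exp_add]
          exact mul_le_mul_of_nonneg_right (Real.exp_le_exp.2 h2)
            (Real.rpow_nonneg ht.le _)
      _ = B t := by rw [hB]; ring
  have hcont : ContinuousOn (fun t : ℝ =>
      Complex.exp (-(t:ℂ)^2 - 2*t*z) * (t:ℂ)^(-ν-1)) (Ioi 0) := by
    refine ContinuousOn.mul ?_ (contOn_cpow _)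
    exact (Complex.continuous_exp.comp (contNeg2 z)).continuousOn
  have hmeas : AEStronglyMeasurable (fun t : ℝ =>
      Complex.exp (-(t:ℂ)^2 - 2*t*z) * (t:ℂ)^(-ν-1)) (volume.restrict (Ioi 0)) :=
    hcont.aestronglyMeasurable measurableSet_Ioi
  have hIntMain : IntegrableOn (fun t : ℝ =>
      Complex.exp (-(t:ℂ)^2 - 2*t*z) * (t:ℂ)^(-ν-1)) (Ioi 0) := by
    refine Integrable.mono' hBint hmeas ?_
    apply (ae_restrict_iff' measurableSet_Ioi).mpr
    filter_upwards with t ht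
    rw [hnorm t ht]
    refine le_trans ?_ (hkey t ht)
    apply mul_le_mul_of_nonneg_right _ (Real.rpow_nonneg ht.le _)
    apply Real.exp_le_exp.2
    nlinarith [neg_abs_le z.re, Complex.abs_re_le_norm z, (show (0:ℝ) < t from ht).le,
      mul_le_mul_of_nonneg_left (neg_le_abs z.re)
        (by have ht' : (0:ℝ) < t := ht; linarith : (0:ℝ) ≤ 2*t),
      mul_le_mul_of_nonneg_left (Complex.abs_re_le_norm z)
        (by have ht' : (0:ℝ) < t := ht; linarith : (0:ℝ) ≤ 2*t)]
  refine ⟨hIntMain, ?_⟩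
  -- term functions
  set g : ℕ → ℝ → ℂ := fun n t =>
    ((-2*z)^n/(Nat.factorial n : ℂ)) * (Complex.exp (-(t:ℂ)^2) * (t:ℂ)^((n:ℂ) - ν - 1))
    with hg
  have hsre : ∀ n : ℕ, 0 < ((n:ℂ) - ν).re := by
    intro n
    simp only [Complex.sub_re, Complex.natCast_re]
    have : (0:ℝ) ≤ (n:ℝ) := by positivity
    linarith
  have hgint : ∀ n : ℕ, IntegrableOn (g n) (Ioi 0) := fun n =>
    (gauss_integrable ((n:ℂ) - ν) (hsre n)).const_mul _
  have hgval : ∀ n : ℕ, ∫ t in Ioi (0:ℝ), g n t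
      = ((-2*z)^n/(Nat.factorial n : ℂ)) * (Complex.Gamma (((n:ℂ)-ν)/2)/2) := by
    intro n
    simp only [hg]
    rw [integral_const_mul, gauss_mellin ((n:ℂ) - ν) (hsre n)]
  have hFint : ∀ N : ℕ, ∫ t in Ioi (0:ℝ), (∑ n ∈ Finset.range N, g n t)
      = ∑ n ∈ Finset.range N,
          ((-2*z)^n/(Nat.factorial n : ℂ)) * (Complex.Gamma (((n:ℂ)-ν)/2)/2) := by
    intro N
    rw [integral_finset_sum _ (fun n _ => hgint n)]
    exact Finset.sum_congr rfl fun n _ => hgval n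
  have hsum := summable_herm ν z hν
  set T : ℂ := ∑' n : ℕ,
    Complex.Gamma (((n : ℂ) - ν) / 2) * (-2 * z) ^ n / (Nat.factorial n : ℂ) with hT
  have hhs : HasSum (fun n : ℕ =>
      Complex.Gamma (((n : ℂ) - ν) / 2) * (-2 * z) ^ n / (Nat.factorial n : ℂ)) T :=
    hsum.hasSum
  have h1 : Tendsto (fun N : ℕ => ∑ n ∈ Finset.range N,
      ((-2*z)^n/(Nat.factorial n : ℂ)) * (Complex.Gamma (((n:ℂ)-ν)/2)/2)) atTop
      (nhds (T/2)) := by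
    refine ((hhs.div_const 2).tendsto_sum_nat).congr fun N => ?_
    exact Finset.sum_congr rfl fun n _ => by ring
  have h2 : Tendsto (fun N : ℕ => ∫ t in Ioi (0:ℝ), (∑ n ∈ Finset.range N, g n t)) atTop
      (nhds (∫ t in Ioi (0:ℝ), Complex.exp (-(t:ℂ)^2 - 2*t*z) * (t:ℂ)^(-ν-1))) := by
    refine tendsto_integral_of_dominated_convergence B ?_ hBint ?_ ?_
    · intro N
      refine ContinuousOn.aestronglyMeasurable ?_ measurableSet_Ioi
      refine continuousOn_finset_sum _ fun n _ => ?_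
      exact continuousOn_const.mul (((Complex.continuous_exp.comp
        contNeg).continuousOn).mul (contOn_cpow _))
    · intro N
      apply (ae_restrict_iff' measurableSet_Ioi).mpr
      filter_upwards with t ht
      have ht' : (0:ℝ) < t := ht
      rw [Fform ν z N ht]
      rw [norm_mul, norm_mul, Complex.norm_exp, Complex.norm_cpow_eq_rpow_re_of_pos ht]
      have h2' : (-ν-1).re = -ν.re - 1 := by simp [Complex.sub_re]
      have h3 : (-(t:ℂ)^2).re = -t^2 := by simp [← Complex.ofReal_pow]
      rw [h2', h3]
      refine le_trans ?_ (hkey t ht)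
      have hS : ‖∑ n ∈ Finset.range N, (-2*(t:ℂ)*z)^n/(Nat.factorial n : ℂ)‖
          ≤ Real.exp (2*t*‖z‖) := by
        refine (norm_sum_le _ _).trans ?_
        have heq : ∀ n ∈ Finset.range N, ‖(-2*(t:ℂ)*z)^n/(Nat.factorial n : ℂ)‖
            = (2*t*‖z‖)^n / (Nat.factorial n) := by
          intro n _
          rw [norm_div, norm_pow, Complex.norm_natCast]
          congr 2
          rw [show (-2*(t:ℂ)*z) = -(((2*t:ℝ):ℂ)*z) by push_cast; ring, norm_neg,
            norm_mul, Complex.norm_real, Real.norm_of_nonneg (by linarith)]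
        rw [Finset.sum_congr rfl heq]
        exact Real.sum_le_exp_of_nonneg
          (mul_nonneg (mul_nonneg (by norm_num : (0:ℝ) ≤ 2) ht'.le) (norm_nonneg z)) N
      calc Real.exp (-t^2) * t ^ (-ν.re-1) *
            ‖∑ n ∈ Finset.range N, (-2*(t:ℂ)*z)^n/(Nat.factorial n : ℂ)‖
          ≤ Real.exp (-t^2) * t ^ (-ν.re-1) * Real.exp (2*t*‖z‖) := by
            refine mul_le_mul_of_nonneg_left hS
              (mul_nonneg (Real.exp_pos _).le (Real.rpow_nonneg ht'.le _))
        _ = Real.exp (-t^2 + 2*t*‖z‖) * t ^ (-ν.re - 1) := by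
            rw [Real.exp_add]; ring
    · apply (ae_restrict_iff' measurableSet_Ioi).mpr
      filter_upwards with t ht
      have hform : ∀ N : ℕ, ∑ n ∈ Finset.range N, g n t
          = Complex.exp (-(t:ℂ)^2) * (t:ℂ)^(-ν-1) *
              ∑ n ∈ Finset.range N, (-2*(t:ℂ)*z)^n/(Nat.factorial n : ℂ) :=
        fun N => Fform ν z N ht
      simp only [hform]
      have hexp : HasSum (fun n : ℕ => (-2*(t:ℂ)*z)^n/(Nat.factorial n : ℂ))
          (Complex.exp (-2*(t:ℂ)*z)) := by
        have := NormedSpace.expSeries_div_hasSum_exp (-2*(t:ℂ)*z)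
        rwa [← Complex.exp_eq_exp_ℂ] at this
      have hlim2 := hexp.tendsto_sum_nat.const_mul
        (Complex.exp (-(t:ℂ)^2) * (t:ℂ)^(-ν-1))
      have heq : Complex.exp (-(t:ℂ)^2 - 2*t*z) * (t:ℂ)^(-ν-1)
          = (Complex.exp (-(t:ℂ)^2) * (t:ℂ)^(-ν-1)) * Complex.exp (-2*(t:ℂ)*z) := by
        rw [show -(t:ℂ)^2 - 2*(t:ℂ)*z = -(t:ℂ)^2 + (-2*(t:ℂ)*z) by ring, Complex.exp_add]
        ring
      rw [heq]
      exact hlim2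
  have h2' : Tendsto (fun N : ℕ => ∑ n ∈ Finset.range N,
      ((-2*z)^n/(Nat.factorial n : ℂ)) * (Complex.Gamma (((n:ℂ)-ν)/2)/2)) atTop
      (nhds (∫ t in Ioi (0:ℝ), Complex.exp (-(t:ℂ)^2 - 2*t*z) * (t:ℂ)^(-ν-1))) :=
    h2.congr hFint
  have hval : (∫ t in Ioi (0:ℝ), Complex.exp (-(t:ℂ)^2 - 2*t*z) * (t:ℂ)^(-ν-1)) = T/2 :=
    tendsto_nhds_unique h2' h1
  rw [hval, HermiteF, ← hT, one_div, one_div, mul_inv]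
  ring
end
end

section
/- Let ω = e^{iπ/4} and fix R > 0. For s with |s| ≤ R, the function of (u, v) ∈ ℝ² given by -i x^{-s} e^{πix² - xζ}/(1 + e^{-ζ}), where x = 1/2 - ωu and ζ = ωv, is absolutely integrable over ℝ², being bounded by C_R (1+|u|)^R e^{-πu² + πu/√2} · e^{-v/(2√2)}/max(e^{-v/√2} - 1, 1). -/
open Complex MeasureTheory Set

noncomputable section

lemma omega_re : ω.re = Real.sqrt 2 / 2 := by
  rw [ω, show ((Real.pi:ℂ) * Complex.I / 4) = ((Real.pi/4 : ℝ) : ℂ) * Complex.I by push_cast; ring]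
  simp [Complex.exp_re, Real.cos_pi_div_four]
lemma omega_im : ω.im = Real.sqrt 2 / 2 := by
  rw [ω, show ((Real.pi:ℂ) * Complex.I / 4) = ((Real.pi/4 : ℝ) : ℂ) * Complex.I by push_cast; ring]
  simp [Complex.exp_im, Real.sin_pi_div_four]
lemma wre (v : ℝ) : (-(ω*v)).re = -(v/Real.sqrt 2) := by
  have h2 : Real.sqrt 2 * Real.sqrt 2 = 2 := Real.mul_self_sqrt (by norm_num)
  have h0 : Real.sqrt 2 ≠ 0 := by positivity
  simp [Complex.mul_re, omega_re, omega_im]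
  field_simp
  linear_combination v * h2
lemma wim (v : ℝ) : (-(ω*v)).im = -(v/Real.sqrt 2) := by
  have h2 : Real.sqrt 2 * Real.sqrt 2 = 2 := Real.mul_self_sqrt (by norm_num)
  have h0 : Real.sqrt 2 ≠ 0 := by positivity
  simp [Complex.mul_im, omega_re, omega_im]
  field_simp
  linear_combination v * h2

lemma zre (u v : ℝ) : ((Real.pi:ℂ) * Complex.I * (1/2 - ω*u)^2 - (1/2 - ω*u) * (ω*v)).re
    = (-Real.pi*u^2 + Real.pi*u/Real.sqrt 2) + (-(v/(2*Real.sqrt 2))) := by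
  have h2 : Real.sqrt 2 * Real.sqrt 2 = 2 := Real.mul_self_sqrt (by norm_num)
  have h0 : Real.sqrt 2 ≠ 0 := by positivity
  simp only [Complex.sub_re, Complex.mul_re, Complex.mul_im, pow_two, omega_re, omega_im,
    Complex.I_re, Complex.I_im, Complex.ofReal_re, Complex.ofReal_im, Complex.one_re,
    Complex.one_im, Complex.sub_im, Complex.div_re, Complex.div_im]
  norm_num
  field_simp
  linear_combination (-2*Real.pi*u^2*Real.sqrt 2 + 2*Real.pi*u - v) * h2

lemma exp_one_ge_two : (2:ℝ) ≤ Real.exp 1 := by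
  have := Real.add_one_le_exp (1:ℝ); linarith

lemma exp_neg_one_le_half : Real.exp (-1) ≤ 1/2 := by
  rw [Real.exp_neg]
  rw [inv_le_comm₀ (Real.exp_pos 1) (by norm_num)]
  norm_num
  exact exp_one_ge_two

lemma denom_sq (v : ℝ) :
    Complex.normSq (1 + Complex.exp (-(ω*v)))
      = (1 - Real.exp (-(v/Real.sqrt 2)))^2
        + 4 * Real.exp (-(v/Real.sqrt 2)) * Real.cos (v/Real.sqrt 2 / 2)^2 := by
  set t := v / Real.sqrt 2 with ht
  have hre : (Complex.exp (-(ω*v))).re = Real.exp (-t) * Real.cos t := by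
    rw [Complex.exp_re, wre, wim]; simp [Real.cos_neg, ht]
  have him : (Complex.exp (-(ω*v))).im = -(Real.exp (-t) * Real.sin t) := by
    rw [Complex.exp_im, wre, wim]; simp [Real.sin_neg, ht]
  rw [Complex.normSq_apply]
  simp only [Complex.add_re, Complex.add_im, Complex.one_re, Complex.one_im, hre, him]
  have hc : Real.cos t = 2 * Real.cos (t/2)^2 - 1 := by
    have h := Real.cos_two_mul (t/2)
    rw [show 2*(t/2) = t by ring] at h
    linarith
  have hs : Real.sin t ^2 = 1 - Real.cos t ^2 := by
    have := Real.sin_sq_add_cos_sq t; linarith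
  linear_combination (Real.exp (-t))^2 * hs + 2*Real.exp (-t) * hc

lemma denom_lb (v : ℝ) :
    Real.exp (-(3*Real.pi/4)) * max (Real.exp (-v/Real.sqrt 2) - 1) 1
      ≤ ‖1 + Complex.exp (-(ω*v))‖ := by
  have hneg : -v/Real.sqrt 2 = -(v/Real.sqrt 2) := by rw [neg_div]
  set t := v / Real.sqrt 2 with ht
  have hM1 : (1:ℝ) ≤ max (Real.exp (-t) - 1) 1 := le_max_right _ _
  have hMnn : (0:ℝ) ≤ max (Real.exp (-t) - 1) 1 := by linarith
  rw [hneg]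
  have hlhs_nn : 0 ≤ Real.exp (-(3*Real.pi/4)) * max (Real.exp (-t) - 1) 1 :=
    mul_nonneg (Real.exp_pos _).le hMnn
  have key : (Real.exp (-(3*Real.pi/4)) * max (Real.exp (-t) - 1) 1)^2
      ≤ Complex.normSq (1 + Complex.exp (-(ω*v))) := by
    rw [denom_sq v, ← ht]
    set M := max (Real.exp (-t) - 1) 1 with hMdef
    have hpi : Real.pi > 3 := Real.pi_gt_three
    have he2 : (2:ℝ) ≤ Real.exp 1 := exp_one_ge_two
    have hE : (Real.exp (-(3*Real.pi/4)))^2 = Real.exp (-(3*Real.pi/2)) := by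
      rw [sq, ← Real.exp_add]; ring_nf
    rw [mul_pow, hE]
    have hcnn : (0:ℝ) ≤ 4 * Real.exp (-t) * Real.cos (t/2)^2 := by positivity
    rcases le_or_gt (|t|) (Real.pi/2) with hcase | hcase
    · -- |t| ≤ π/2
      have hcos : Real.sqrt 2 / 2 ≤ Real.cos (t/2) := by
        rw [← Real.cos_pi_div_four]
        have habs : Real.cos (|t|/2) = Real.cos (t/2) := by
          rcases abs_cases t with ⟨h, _⟩ | ⟨h, _⟩
          · rw [h]
          · rw [h, show -t/2 = -(t/2) by ring, Real.cos_neg]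
        rw [← habs]
        apply Real.cos_le_cos_of_nonneg_of_le_pi
        · positivity
        · linarith [abs_nonneg t]
        · linarith
      have hcos2 : (1:ℝ)/2 ≤ Real.cos (t/2)^2 := by
        nlinarith [Real.sq_sqrt (show (0:ℝ) ≤ 2 by norm_num), Real.sqrt_nonneg 2]
      have hMle : M ≤ Real.exp |t| := by
        apply max_le
        · have : Real.exp (-t) ≤ Real.exp |t| := Real.exp_le_exp.2 (by cases abs_cases t <;> linarith)
          linarith
        · exact Real.one_le_exp (abs_nonneg t)
      have hM2 : M^2 ≤ Real.exp Real.pi := by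
        calc M^2 ≤ (Real.exp |t|)^2 := pow_le_pow_left₀ hMnn hMle 2
        _ = Real.exp (2*|t|) := by rw [sq, ← Real.exp_add]; ring_nf
        _ ≤ Real.exp Real.pi := Real.exp_le_exp.2 (by linarith)
      have h1 : Real.exp (-(3*Real.pi/2)) * M^2 ≤ Real.exp (-(Real.pi/2)) := by
        calc Real.exp (-(3*Real.pi/2)) * M^2 ≤ Real.exp (-(3*Real.pi/2)) * Real.exp Real.pi :=
          mul_le_mul_of_nonneg_left hM2 (Real.exp_pos _).le
        _ = Real.exp (-(Real.pi/2)) := by rw [← Real.exp_add]; ring_nf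
      have h2 : Real.exp (-(Real.pi/2)) ≤ Real.exp (-t) := Real.exp_le_exp.2 (by cases abs_cases t <;> linarith)
      nlinarith [sq_nonneg (1 - Real.exp (-t)),
        mul_le_mul_of_nonneg_left hcos2 (Real.exp_pos (-t)).le]
    · rcases le_or_gt t 0 with hneg' | hpos
      · -- t < -π/2
        have htlt : t < -(Real.pi/2) := by
          rw [abs_of_nonpos hneg'] at hcase; linarith
        have hexp2 : (2:ℝ) ≤ Real.exp (-t) := by
          calc (2:ℝ) ≤ Real.exp 1 := he2
          _ ≤ Real.exp (-t) := Real.exp_le_exp.2 (by linarith)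
        have hM : M = Real.exp (-t) - 1 := max_eq_left (by linarith)
        have hE1 : Real.exp (-(3*Real.pi/2)) ≤ 1 := Real.exp_le_one_iff.2 (by linarith)
        rw [hM]
        nlinarith [sq_nonneg (Real.exp (-t) - 1)]
      · -- t > π/2
        have htgt : Real.pi/2 < t := by rw [_root_.abs_of_nonneg hpos.le] at hcase; linarith
        have hexp : Real.exp (-t) ≤ 1/2 := by
          calc Real.exp (-t) ≤ Real.exp (-1) := Real.exp_le_exp.2 (by linarith)
          _ ≤ 1/2 := exp_neg_one_le_half
        have hM : M = 1 := max_eq_right (by linarith [Real.exp_pos (-t)])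
        have hE' : Real.exp (-(3*Real.pi/2)) ≤ 1/4 := by
          calc Real.exp (-(3*Real.pi/2)) ≤ Real.exp (-2) := Real.exp_le_exp.2 (by linarith)
          _ = Real.exp (-1) * Real.exp (-1) := by rw [← Real.exp_add]; ring_nf
          _ ≤ 1/4 := by nlinarith [Real.exp_pos (-1), exp_neg_one_le_half]
        rw [hM]
        nlinarith []
  have hsq : Real.exp (-(3*Real.pi/4)) * max (Real.exp (-t) - 1) 1
      = Real.sqrt ((Real.exp (-(3*Real.pi/4)) * max (Real.exp (-t) - 1) 1)^2) :=
    (Real.sqrt_sq hlhs_nn).symm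
  rw [hsq, Complex.norm_def]
  exact Real.sqrt_le_sqrt key


lemma xre (u : ℝ) : (1/2 - ω*(u:ℂ)).re = 1/2 - Real.sqrt 2/2 * u := by
  simp [Complex.sub_re, Complex.mul_re, omega_re, omega_im]
lemma xim (u : ℝ) : (1/2 - ω*(u:ℂ)).im = -(Real.sqrt 2/2 * u) := by
  simp [Complex.sub_im, Complex.mul_im, omega_re, omega_im]

lemma normSq_x_ge (u : ℝ) : 1/8 ≤ Complex.normSq (1/2 - ω*(u:ℂ)) := by
  have h2 : Real.sqrt 2 * Real.sqrt 2 = 2 := Real.mul_self_sqrt (by norm_num)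
  rw [Complex.normSq_apply, xre, xim]
  have h2u : Real.sqrt 2 * Real.sqrt 2 * u^2 = 2 * u^2 := by rw [h2]
  nlinarith [sq_nonneg (u - Real.sqrt 2/4), h2, h2u]

lemma x_ne_zero (u : ℝ) : (1/2 - ω*(u:ℂ)) ≠ 0 := by
  intro h
  have := normSq_x_ge u
  rw [h, Complex.normSq_zero] at this
  norm_num at this

lemma absx_lb (u : ℝ) : (2*Real.sqrt 2)⁻¹ ≤ ‖(1/2 - ω*(u:ℂ))‖ := by
  have h2 : Real.sqrt 2 * Real.sqrt 2 = 2 := Real.mul_self_sqrt (by norm_num)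
  have hw : (0:ℝ) < Real.sqrt 2 := Real.sqrt_pos.2 (by norm_num)
  rw [Complex.norm_def]
  rw [show (2*Real.sqrt 2)⁻¹ = Real.sqrt (1/8) by
    rw [show (1:ℝ)/8 = ((2*Real.sqrt 2)⁻¹)^2 by field_simp; nlinarith]
    rw [Real.sqrt_sq (by positivity)]]
  exact Real.sqrt_le_sqrt (normSq_x_ge u)

lemma absx_ub (u : ℝ) : ‖(1/2 - ω*(u:ℂ))‖ ≤ 1 + |u| := by
  have habs : ‖ω‖ = 1 := by rw [ω, Complex.norm_exp]; simp
  calc ‖(1/2 - ω*(u:ℂ))‖ ≤ ‖(1/2 : ℂ)‖ + ‖(ω*(u:ℂ))‖ := by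
        simpa using norm_sub_le (1/2 : ℂ) (ω*(u:ℂ))
    _ = 1/2 + |u| := by rw [norm_mul, habs, one_mul, Complex.norm_real, Real.norm_eq_abs]; norm_num
    _ ≤ 1 + |u| := by linarith

lemma rpow_aux {a m t R : ℝ} (ha : 0 < a) (h1 : a ≤ m) (h2 : a⁻¹ ≤ m) (hm : 1 ≤ m)
    (ht : |t| ≤ R) : a ^ t ≤ m ^ R := by
  rcases le_total 0 t with h | h
  · calc a ^ t ≤ m ^ t := Real.rpow_le_rpow ha.le h1 h
      _ ≤ m ^ R := Real.rpow_le_rpow_of_exponent_le hm (by rw [_root_.abs_of_nonneg h] at ht; linarith)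
  · have key : a ^ t = (a⁻¹) ^ (-t) := by
      rw [Real.rpow_neg (by positivity), Real.inv_rpow ha.le, inv_inv]
    rw [key]
    calc (a⁻¹) ^ (-t) ≤ m ^ (-t) := Real.rpow_le_rpow (by positivity) h2 (by linarith)
      _ ≤ m ^ R := Real.rpow_le_rpow_of_exponent_le hm (by rw [_root_.abs_of_nonpos h] at ht; linarith)

lemma cpow_bound {R : ℝ} (hR0 : 0 ≤ R) {s : ℂ} (hs : ‖s‖ ≤ R) (u : ℝ) :
    ‖(1/2 - ω*(u:ℂ)) ^ (-s)‖ ≤ Real.exp (Real.pi*R) * ((2*Real.sqrt 2) ^ R * (1+|u|) ^ R) := by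
  have hw : (0:ℝ) < Real.sqrt 2 := Real.sqrt_pos.2 (by norm_num)
  have hw1 : (1:ℝ) ≤ Real.sqrt 2 := by
    nlinarith [Real.sq_sqrt (show (0:ℝ) ≤ 2 by norm_num), Real.sqrt_nonneg 2]
  set x : ℂ := 1/2 - ω*(u:ℂ) with hx
  have hx0 : x ≠ 0 := x_ne_zero u
  rw [Complex.norm_cpow_of_ne_zero hx0]
  have habs : (0:ℝ) < ‖x‖ := norm_pos_iff.mpr hx0
  have hbase : ‖x‖ ^ (-s).re ≤ (2*Real.sqrt 2) ^ R * (1+|u|) ^ R := by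
    rw [← Real.mul_rpow (by positivity) (by positivity)]
    apply rpow_aux habs
    · calc ‖x‖ ≤ 1 + |u| := absx_ub u
        _ ≤ 2*Real.sqrt 2 * (1+|u|) := by nlinarith [abs_nonneg u, hw1]
    · calc (‖x‖)⁻¹ ≤ ((2*Real.sqrt 2)⁻¹)⁻¹ :=
          inv_anti₀ (by positivity) (absx_lb u)
        _ = 2*Real.sqrt 2 := inv_inv _
        _ ≤ 2*Real.sqrt 2 * (1+|u|) := by nlinarith [abs_nonneg u, hw1]
    · nlinarith [abs_nonneg u, hw1]
    · calc |(-s).re| ≤ ‖(-s)‖ := Complex.abs_re_le_norm (-s)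
        _ = ‖s‖ := by rw [norm_neg]
        _ ≤ R := hs
  have hdiv : Real.exp (-(Real.pi*R)) ≤ Real.exp (Complex.arg x * (-s).im) := by
    apply Real.exp_le_exp.2
    have h1 : |Complex.arg x * (-s).im| ≤ Real.pi * R := by
      rw [abs_mul]
      apply mul_le_mul (Complex.abs_arg_le_pi x) ?_ (abs_nonneg _) Real.pi_pos.le
      calc |(-s).im| ≤ ‖(-s)‖ := Complex.abs_im_le_norm (-s)
        _ = ‖s‖ := by rw [norm_neg]
        _ ≤ R := hs
    cases abs_cases (Complex.arg x * (-s).im) <;> linarith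
  calc ‖x‖ ^ (-s).re / Real.exp (Complex.arg x * (-s).im)
      ≤ ‖x‖ ^ (-s).re / Real.exp (-(Real.pi*R)) := by
        exact (div_le_div_iff_of_pos_left (by positivity) (Real.exp_pos _) (Real.exp_pos _)).2 hdiv
    _ = Real.exp (Real.pi*R) * ‖x‖ ^ (-s).re := by
        rw [Real.exp_neg, div_eq_mul_inv, inv_inv, mul_comm]
    _ ≤ Real.exp (Real.pi*R) * ((2*Real.sqrt 2) ^ R * (1+|u|) ^ R) := by
        apply mul_le_mul_of_nonneg_left hbase (Real.exp_pos _).le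



lemma hslit (u : ℝ) : (1/2 - ω*(u:ℂ)) ∈ Complex.slitPlane := by
  rw [Complex.mem_slitPlane_iff]
  rcases eq_or_ne u 0 with rfl|h
  · left; rw [xre]; norm_num
  · right
    rw [xim]
    have hw : (0:ℝ) < Real.sqrt 2 := Real.sqrt_pos.2 (by norm_num)
    intro hc
    apply h
    have := neg_eq_zero.1 hc
    rcases mul_eq_zero.1 this with h'|h'
    · nlinarith
    · exact h'

lemma ubound (R : ℝ) (hR0 : 0 ≤ R) (u : ℝ) :
    (1+|u|)^R * Real.exp (-Real.pi*u^2 + Real.pi*u/Real.sqrt 2)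
      ≤ Real.exp ((R+Real.pi)^2) * Real.exp (-(Real.pi/2)*u^2) := by
  have hw : (0:ℝ) < Real.sqrt 2 := Real.sqrt_pos.2 (by norm_num)
  have hw1 : (1:ℝ) ≤ Real.sqrt 2 := by
    nlinarith [Real.sq_sqrt (show (0:ℝ) ≤ 2 by norm_num), Real.sqrt_nonneg 2]
  have h1 : (1+|u|)^R ≤ Real.exp (|u| * R) := by
    have hle : (1+|u|) ≤ Real.exp |u| := by
      have := Real.add_one_le_exp |u|; linarith
    calc (1+|u|)^R ≤ (Real.exp |u|)^R := Real.rpow_le_rpow (by positivity) hle hR0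
      _ = Real.exp (|u| * R) := (Real.exp_mul |u| R).symm
  have hdiv : Real.pi*u/Real.sqrt 2 ≤ Real.pi*|u| := by
    rw [mul_div_assoc]
    apply mul_le_mul_of_nonneg_left ?_ Real.pi_pos.le
    rcases le_or_gt u 0 with h|h
    · have hd : u / Real.sqrt 2 ≤ 0 := by
        rw [div_nonpos_iff]; right; exact ⟨h, hw.le⟩
      linarith [abs_nonneg u]
    · have hd : u / Real.sqrt 2 ≤ u := by
        rw [div_le_iff₀ hw]; nlinarith [mul_le_mul_of_nonneg_left hw1 h.le]
      calc u / Real.sqrt 2 ≤ u := hd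
        _ ≤ |u| := le_abs_self u
  calc (1+|u|)^R * Real.exp (-Real.pi*u^2 + Real.pi*u/Real.sqrt 2)
      ≤ Real.exp (|u| * R) * Real.exp (-Real.pi*u^2 + Real.pi*u/Real.sqrt 2) :=
        mul_le_mul_of_nonneg_right h1 (Real.exp_pos _).le
    _ = Real.exp (|u| * R + (-Real.pi*u^2 + Real.pi*u/Real.sqrt 2)) := (Real.exp_add _ _).symm
    _ ≤ Real.exp ((R+Real.pi)^2 + -(Real.pi/2)*u^2) := by
        apply Real.exp_le_exp.2
        have hpi : Real.pi > 3 := Real.pi_gt_three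
        nlinarith [sq_nonneg (|u| - (R+Real.pi)), _root_.sq_abs u, abs_nonneg u]
    _ = Real.exp ((R+Real.pi)^2) * Real.exp (-(Real.pi/2)*u^2) := Real.exp_add _ _

lemma vbound (v : ℝ) :
    Real.exp (-v/(2*Real.sqrt 2)) / max (Real.exp (-v/Real.sqrt 2) - 1) 1
      ≤ 2 * Real.exp (-((2*Real.sqrt 2)⁻¹ * |v|)) := by
  have hw : (0:ℝ) < Real.sqrt 2 := Real.sqrt_pos.2 (by norm_num)
  have hw0 : Real.sqrt 2 ≠ 0 := ne_of_gt hw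
  have hM1 : (1:ℝ) ≤ max (Real.exp (-v/Real.sqrt 2) - 1) 1 := le_max_right _ _
  have hMpos : (0:ℝ) < max (Real.exp (-v/Real.sqrt 2) - 1) 1 := by linarith
  rw [div_le_iff₀ hMpos]
  rcases le_or_gt 0 v with h|h
  · have heq : Real.exp (-v/(2*Real.sqrt 2)) = Real.exp (-((2*Real.sqrt 2)⁻¹ * |v|)) := by
      congr 1; rw [_root_.abs_of_nonneg h]; ring
    rw [heq]
    nlinarith [Real.exp_pos (-((2*Real.sqrt 2)⁻¹ * |v|)),
      mul_nonneg (show (0:ℝ) ≤ 2*(max (Real.exp (-v/Real.sqrt 2) - 1) 1) - 2 by linarith)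
        (Real.exp_pos (-((2*Real.sqrt 2)⁻¹ * |v|))).le]
  · have hEM : Real.exp (-v/Real.sqrt 2) ≤ 2 * max (Real.exp (-v/Real.sqrt 2) - 1) 1 := by
      rcases le_or_gt (Real.exp (-v/Real.sqrt 2)) 2 with h2|h2
      · linarith
      · linarith [le_max_left (Real.exp (-v/Real.sqrt 2) - 1) (1:ℝ)]
    have split : Real.exp (-v/(2*Real.sqrt 2))
        = Real.exp (-((2*Real.sqrt 2)⁻¹ * |v|)) * Real.exp (-v/Real.sqrt 2) := by
      rw [← Real.exp_add]; congr 1; rw [abs_of_neg h]; ring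
    rw [split]
    calc Real.exp (-((2*Real.sqrt 2)⁻¹ * |v|)) * Real.exp (-v/Real.sqrt 2)
        ≤ Real.exp (-((2*Real.sqrt 2)⁻¹ * |v|)) * (2 * max (Real.exp (-v/Real.sqrt 2) - 1) 1) :=
          mul_le_mul_of_nonneg_left hEM (Real.exp_pos _).le
      _ = 2 * Real.exp (-((2*Real.sqrt 2)⁻¹ * |v|)) * max (Real.exp (-v/Real.sqrt 2) - 1) 1 := by
          ring

lemma integrable_exp_neg_mul_abs' {c : ℝ} (hc : 0 < c) :
    Integrable (fun v : ℝ => Real.exp (-c * |v|)) := by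
  have h1 : IntegrableOn (fun v : ℝ => Real.exp (-c * |v|)) (Ioi 0) :=
    (exp_neg_integrableOn_Ioi 0 hc).congr_fun
      (fun x hx => by rw [abs_of_pos hx]) measurableSet_Ioi
  have h2 : IntegrableOn (fun v : ℝ => Real.exp (-c * |v|)) (Iic 0) := by
    have m : MeasurableEmbedding fun x : ℝ => -x := (Homeomorph.neg ℝ).measurableEmbedding
    rw [← Measure.map_neg_eq_self (volume : Measure ℝ), m.integrableOn_map_iff]
    simp_rw [Function.comp_def, abs_neg, neg_preimage, neg_Iic, neg_zero]
    exact Iff.mpr integrableOn_Ici_iff_integrableOn_Ioi h1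
  have h3 := h2.union h1
  rwa [Iic_union_Ioi, integrableOn_univ] at h3

lemma pointwise_bound (R : ℝ) (hR0 : 0 ≤ R) {s : ℂ} (hs : ‖s‖ ≤ R) (u v : ℝ) :
    ‖-Complex.I * ((1 / 2 - ω * u) ^ (-s) *
        Complex.exp (Real.pi * Complex.I * (1 / 2 - ω * u) ^ 2 -
          (1 / 2 - ω * u) * (ω * v)) / (1 + Complex.exp (-(ω * v))))‖ ≤
      (Real.exp (Real.pi * R + 3 * Real.pi / 4) * (2 * Real.sqrt 2) ^ R) * (1 + |u|) ^ R *
        Real.exp (-Real.pi * u ^ 2 + Real.pi * u / Real.sqrt 2) *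
        (Real.exp (-v / (2 * Real.sqrt 2)) / max (Real.exp (-v / Real.sqrt 2) - 1) 1) := by
  have hw : (0:ℝ) < Real.sqrt 2 := Real.sqrt_pos.2 (by norm_num)
  have hM1 : (1:ℝ) ≤ max (Real.exp (-v / Real.sqrt 2) - 1) 1 := le_max_right _ _
  have hMpos : (0:ℝ) < max (Real.exp (-v / Real.sqrt 2) - 1) 1 := by linarith
  have hDlb := denom_lb v
  have hDpos : (0:ℝ) < Real.exp (-(3 * Real.pi / 4)) * max (Real.exp (-v / Real.sqrt 2) - 1) 1 :=
    mul_pos (Real.exp_pos _) hMpos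
  have hE : ‖Complex.exp ((Real.pi:ℂ) * Complex.I * (1 / 2 - ω * u) ^ 2 -
      (1 / 2 - ω * u) * (ω * v))‖
      = Real.exp (-Real.pi * u ^ 2 + Real.pi * u / Real.sqrt 2) *
        Real.exp (-(v / (2 * Real.sqrt 2))) := by
    rw [Complex.norm_exp, zre u v, Real.exp_add]
  rw [norm_mul, norm_neg, Complex.norm_I, one_mul, norm_div, norm_mul]
  have hnum : ‖(1 / 2 - ω * (u:ℂ)) ^ (-s)‖ *
      ‖Complex.exp ((Real.pi:ℂ) * Complex.I * (1 / 2 - ω * u) ^ 2 -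
        (1 / 2 - ω * u) * (ω * v))‖
      ≤ (Real.exp (Real.pi * R) * ((2 * Real.sqrt 2) ^ R * (1 + |u|) ^ R)) *
        (Real.exp (-Real.pi * u ^ 2 + Real.pi * u / Real.sqrt 2) *
          Real.exp (-(v / (2 * Real.sqrt 2)))) := by
    apply mul_le_mul (cpow_bound hR0 hs u) (le_of_eq hE) (norm_nonneg _) (by positivity)
  calc ‖(1 / 2 - ω * (u:ℂ)) ^ (-s)‖ *
      ‖Complex.exp ((Real.pi:ℂ) * Complex.I * (1 / 2 - ω * u) ^ 2 -
        (1 / 2 - ω * u) * (ω * v))‖ / ‖1 + Complex.exp (-(ω * v))‖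
      ≤ (Real.exp (Real.pi * R) * ((2 * Real.sqrt 2) ^ R * (1 + |u|) ^ R)) *
        (Real.exp (-Real.pi * u ^ 2 + Real.pi * u / Real.sqrt 2) *
          Real.exp (-(v / (2 * Real.sqrt 2)))) /
        (Real.exp (-(3 * Real.pi / 4)) * max (Real.exp (-v / Real.sqrt 2) - 1) 1) :=
      div_le_div₀ (by positivity) hnum hDpos hDlb
    _ = (Real.exp (Real.pi * R + 3 * Real.pi / 4) * (2 * Real.sqrt 2) ^ R) * (1 + |u|) ^ R *
        Real.exp (-Real.pi * u ^ 2 + Real.pi * u / Real.sqrt 2) *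
        (Real.exp (-v / (2 * Real.sqrt 2)) / max (Real.exp (-v / Real.sqrt 2) - 1) 1) := by
      rw [Real.exp_add (Real.pi * R) (3 * Real.pi / 4),
        show -v / (2 * Real.sqrt 2) = -(v / (2 * Real.sqrt 2)) from neg_div _ _]
      simp only [Real.exp_neg, div_eq_mul_inv, mul_inv, inv_inv]
      ring

theorem double_integrand_bound (R : ℝ) (hR : 0 < R) :
    ∃ C > 0, ∀ s : ℂ, ‖s‖ ≤ R →
      Integrable (fun p : ℝ × ℝ =>
        -Complex.I * ((1 / 2 - ω * p.1) ^ (-s) *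
          Complex.exp (Real.pi * Complex.I * (1 / 2 - ω * p.1) ^ 2 -
            (1 / 2 - ω * p.1) * (ω * p.2)) / (1 + Complex.exp (-(ω * p.2))))) ∧
      ∀ u v : ℝ,
        ‖-Complex.I * ((1 / 2 - ω * u) ^ (-s) *
          Complex.exp (Real.pi * Complex.I * (1 / 2 - ω * u) ^ 2 -
            (1 / 2 - ω * u) * (ω * v)) / (1 + Complex.exp (-(ω * v))))‖ ≤
        C * (1 + |u|) ^ R * Real.exp (-Real.pi * u ^ 2 + Real.pi * u / Real.sqrt 2) *
          (Real.exp (-v / (2 * Real.sqrt 2)) / max (Real.exp (-v / Real.sqrt 2) - 1) 1) := by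
  have hw : (0:ℝ) < Real.sqrt 2 := Real.sqrt_pos.2 (by norm_num)
  set C : ℝ := Real.exp (Real.pi * R + 3 * Real.pi / 4) * (2 * Real.sqrt 2) ^ R with hC
  have hCpos : 0 < C := by positivity
  refine ⟨C, hCpos, fun s hs => ⟨?_, fun u v => pointwise_bound R hR.le hs u v⟩⟩
  -- integrability
  have hφ : Integrable (fun u : ℝ =>
      (C * Real.exp ((R + Real.pi) ^ 2)) * Real.exp (-(Real.pi / 2) * u ^ 2)) :=
    (integrable_exp_neg_mul_sq (by positivity : (0:ℝ) < Real.pi / 2)).const_mul _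
  have hψ : Integrable (fun v : ℝ => 2 * Real.exp (-(2 * Real.sqrt 2)⁻¹ * |v|)) :=
    (integrable_exp_neg_mul_abs' (by positivity)).const_mul 2
  have hprod := hφ.mul_prod hψ
  -- continuity
  have hx : Continuous fun p : ℝ × ℝ => (1 / 2 - ω * (p.1 : ℂ)) :=
    continuous_const.sub (continuous_const.mul (Complex.continuous_ofReal.comp continuous_fst))
  have hv : Continuous fun p : ℝ × ℝ => (ω * (p.2 : ℂ)) :=
    continuous_const.mul (Complex.continuous_ofReal.comp continuous_snd)
  have hA : Continuous fun p : ℝ × ℝ => (1 / 2 - ω * (p.1 : ℂ)) ^ (-s) :=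
    hx.cpow continuous_const (fun p => hslit p.1)
  have hEc : Continuous fun p : ℝ × ℝ => Complex.exp ((Real.pi:ℂ) * Complex.I *
      (1 / 2 - ω * p.1) ^ 2 - (1 / 2 - ω * p.1) * (ω * p.2)) :=
    Complex.continuous_exp.comp ((continuous_const.mul (hx.pow 2)).sub (hx.mul hv))
  have hD0 : ∀ v : ℝ, (1 + Complex.exp (-(ω * (v:ℂ)))) ≠ 0 := by
    intro v hzero
    have h := denom_lb v
    rw [hzero, norm_zero] at h
    nlinarith [Real.exp_pos (-(3 * Real.pi / 4)),
      le_max_right (Real.exp (-v / Real.sqrt 2) - 1) (1:ℝ),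
      mul_pos (Real.exp_pos (-(3 * Real.pi / 4)))
        (show (0:ℝ) < max (Real.exp (-v / Real.sqrt 2) - 1) 1 by
          have := le_max_right (Real.exp (-v / Real.sqrt 2) - 1) (1:ℝ); linarith)]
  have hD : Continuous fun p : ℝ × ℝ => (1 + Complex.exp (-(ω * (p.2:ℂ)))) :=
    continuous_const.add (Complex.continuous_exp.comp hv.neg)
  have hcont : Continuous (fun p : ℝ × ℝ =>
      -Complex.I * ((1 / 2 - ω * p.1) ^ (-s) *
        Complex.exp ((Real.pi:ℂ) * Complex.I * (1 / 2 - ω * p.1) ^ 2 -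
          (1 / 2 - ω * p.1) * (ω * p.2)) / (1 + Complex.exp (-(ω * p.2))))) :=
    continuous_const.mul ((hA.mul hEc).div hD (fun p => hD0 p.2))
  apply Integrable.mono' hprod hcont.aestronglyMeasurable
  filter_upwards with p
  have hM1 : (1:ℝ) ≤ max (Real.exp (-p.2 / Real.sqrt 2) - 1) 1 := le_max_right _ _
  have hMpos : (0:ℝ) < max (Real.exp (-p.2 / Real.sqrt 2) - 1) 1 := by linarith
  calc ‖-Complex.I * ((1 / 2 - ω * p.1) ^ (-s) *
        Complex.exp ((Real.pi:ℂ) * Complex.I * (1 / 2 - ω * p.1) ^ 2 -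
          (1 / 2 - ω * p.1) * (ω * p.2)) / (1 + Complex.exp (-(ω * p.2))))‖
      ≤ C * (1 + |p.1|) ^ R * Real.exp (-Real.pi * p.1 ^ 2 + Real.pi * p.1 / Real.sqrt 2) *
        (Real.exp (-p.2 / (2 * Real.sqrt 2)) / max (Real.exp (-p.2 / Real.sqrt 2) - 1) 1) :=
      pointwise_bound R hR.le hs p.1 p.2
    _ ≤ C * (Real.exp ((R + Real.pi) ^ 2) * Real.exp (-(Real.pi / 2) * p.1 ^ 2)) *
        (2 * Real.exp (-(2 * Real.sqrt 2)⁻¹ * |p.2|)) := by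
      have h1 := ubound R hR.le p.1
      have h2 := vbound p.2
      have e1 : C * (1 + |p.1|) ^ R *
          Real.exp (-Real.pi * p.1 ^ 2 + Real.pi * p.1 / Real.sqrt 2) *
          (Real.exp (-p.2 / (2 * Real.sqrt 2)) / max (Real.exp (-p.2 / Real.sqrt 2) - 1) 1)
          = C * ((1 + |p.1|) ^ R *
            Real.exp (-Real.pi * p.1 ^ 2 + Real.pi * p.1 / Real.sqrt 2)) *
          (Real.exp (-p.2 / (2 * Real.sqrt 2)) / max (Real.exp (-p.2 / Real.sqrt 2) - 1) 1) := by
        ring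
      rw [e1]
      apply mul_le_mul (mul_le_mul_of_nonneg_left h1 hCpos.le) ?_ (by positivity) (by positivity)
      calc Real.exp (-p.2 / (2 * Real.sqrt 2)) / max (Real.exp (-p.2 / Real.sqrt 2) - 1) 1
          ≤ 2 * Real.exp (-((2 * Real.sqrt 2)⁻¹ * |p.2|)) := vbound p.2
        _ = 2 * Real.exp (-(2 * Real.sqrt 2)⁻¹ * |p.2|) := by rw [neg_mul]
    _ = (C * Real.exp ((R + Real.pi) ^ 2)) * Real.exp (-(Real.pi / 2) * p.1 ^ 2) *
        (2 * Real.exp (-(2 * Real.sqrt 2)⁻¹ * |p.2|)) := by ring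
end
end

section
/- For v ∈ ℝ and ω = e^{iπ/4}, one has |1 + e^{-ωv}| ≥ c · max(e^{-v/√2} - 1, 1) for some absolute constant c > 0; in particular 1 + e^{-ωv} never vanishes for real v. -/
open Complex MeasureTheory Set

noncomputable section

theorem denominator_lower_bound :
    (∃ c > 0, ∀ v : ℝ,
      c * max (Real.exp (-v / Real.sqrt 2) - 1) 1 ≤ ‖1 + Complex.exp (-(ω * v))‖) ∧
    ∀ v : ℝ, 1 + Complex.exp (-(ω * v)) ≠ 0 := by
  have hs2 : (0:ℝ) < Real.sqrt 2 := by positivity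
  have main : ∀ v : ℝ, (1/2 : ℝ) * max (Real.exp (-v / Real.sqrt 2) - 1) 1 ≤
      ‖1 + Complex.exp (-(ω * v))‖ := by
    intro v
    set a : ℝ := -v / Real.sqrt 2 with ha
    have hω : ω = Complex.ofReal (Real.sqrt 2 / 2) * (1 + Complex.I) := by
      rw [ω, show ((Real.pi : ℂ) * Complex.I / 4) = ((Real.pi / 4 : ℝ) : ℂ) * Complex.I by
        push_cast; ring, Complex.exp_mul_I, ← Complex.ofReal_cos, ← Complex.ofReal_sin,
        Real.cos_pi_div_four, Real.sin_pi_div_four]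
      push_cast; ring
    have hav : a = -(Real.sqrt 2 / 2 * v) := by
      rw [ha]
      rw [div_eq_iff (by positivity : Real.sqrt 2 ≠ 0)]
      have h2 : Real.sqrt 2 * Real.sqrt 2 = 2 := Real.mul_self_sqrt (by norm_num)
      linear_combination (v/2) * h2
    have hωv : -(ω * v) = (↑a + ↑a * Complex.I) := by
      rw [hω, hav]; push_cast; ring
    have hre : (Complex.exp (-(ω * v))).re = Real.exp a * Real.cos a := by
      rw [hωv, Complex.exp_re]; simp
    have hnorm : ‖Complex.exp (-(ω * v))‖ = Real.exp a := by
      rw [Complex.norm_exp, hωv]; simp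
    set z := Complex.exp (-(ω * v)) with hz
    have hrpos : (0:ℝ) < Real.exp a := Real.exp_pos a
    rcases le_or_gt 0 (Real.cos a) with hc | hc
    · -- cos a ≥ 0 : Re z ≥ 0
      have hRe : 0 ≤ z.re := by rw [hre]; positivity
      have h1 : (1:ℝ) ≤ ‖1 + z‖ := by
        have h1' : (1:ℝ) ≤ (1 + z).re := by
          rw [Complex.add_re, Complex.one_re]; linarith
        calc (1:ℝ) ≤ (1 + z).re := h1'
          _ ≤ ‖1 + z‖ := Complex.re_le_norm _
          _ = ‖1 + z‖ := rfl
      have h2 : Real.exp a ≤ ‖1 + z‖ := by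
        have hsq : Complex.normSq z ≤ Complex.normSq (1 + z) := by
          have hns : Complex.normSq (1 + z) =
              Complex.normSq 1 + Complex.normSq z + 2 * ((1 : ℂ) * (starRingEnd ℂ) z).re :=
            Complex.normSq_add 1 z
          simp only [Complex.normSq_one, one_mul, Complex.conj_re] at hns
          rw [hns]
          nlinarith [Complex.normSq_nonneg z]
        calc Real.exp a = ‖z‖ := hnorm.symm
          _ = Real.sqrt (Complex.normSq z) := by
              rw [Complex.norm_def]
          _ ≤ Real.sqrt (Complex.normSq (1 + z)) := Real.sqrt_le_sqrt hsq
          _ = ‖1 + z‖ := by rw [Complex.norm_def]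
      have hmax : max (Real.exp a - 1) 1 ≤ ‖1 + z‖ :=
        max_le (by linarith) h1
      have hmax1 : (1:ℝ) ≤ max (Real.exp a - 1) 1 := le_max_right _ _
      linarith
    · -- cos a < 0 : |a| > π/2
      have hpi : Real.pi / 2 < |a| := by
        by_contra h
        push_neg at h
        have := Real.cos_nonneg_of_mem_Icc (x := a)
          ⟨by linarith [(abs_le.mp h).1], (abs_le.mp h).2⟩
        linarith
      have hpi3 : (3:ℝ) < Real.pi := Real.pi_gt_three
      rcases lt_abs.mp hpi with hA | hA
      · -- a > π/2, r ≥ 2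
        have hr2 : (2:ℝ) ≤ Real.exp a := by
          have := Real.add_one_le_exp a
          linarith
        have hlow : Real.exp a - 1 ≤ ‖1 + z‖ := by
          have hn := norm_add_le (1 + z) (-1 : ℂ)
          have he : (1:ℂ) + z + (-1) = z := by ring
          rw [he, hnorm, norm_neg, norm_one] at hn
          linarith
        have hmax : max (Real.exp a - 1) 1 = Real.exp a - 1 :=
          max_eq_left (by linarith)
        rw [hmax]
        linarith
      · -- a < -π/2, r ≤ 1/2
        have hr2 : Real.exp a < 1/2 := by
          have h1 : (2:ℝ) < Real.exp (-a) := by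
            have := Real.add_one_le_exp (-a)
            linarith
          have hmul : Real.exp a * Real.exp (-a) = 1 := by
            rw [← Real.exp_add]; simp
          nlinarith [Real.exp_pos a]
        have hlow : 1 - Real.exp a ≤ ‖1 + z‖ := by
          have hn := norm_add_le (1 + z) (-z)
          have he : (1:ℂ) + z + (-z) = 1 := by ring
          rw [he, norm_neg, norm_one, hnorm] at hn
          linarith
        have hmax : max (Real.exp a - 1) 1 = 1 :=
          max_eq_right (by linarith)
        rw [hmax]
        linarith
  refine ⟨⟨1/2, by norm_num, main⟩, ?_⟩
  intro v h0
  have h := main v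
  rw [h0, norm_zero] at h
  have h1 : (1:ℝ) ≤ max (Real.exp (-v / Real.sqrt 2) - 1) 1 := le_max_right _ _
  linarith
end
end
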